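/- Under Assumption 1, the spectral radius of the matrix ΛP is strictly less than 1; in particular, the matrix I − ΛP is invertible. -/

import Mathlib

open Matrix
open scoped NNReal ENNReal

/-- The spectral radius of a square real matrix: the supremum of the moduli of its
complex eigenvalues (elements of the complex spectrum of the complexified matrix). -/
noncomputable def specRad {N : ℕ} (M : Matrix (Fin N) (Fin N) ℝ) : ENNReal :=
  spectralRadius ℂ (M.map (algebraMap ℝ ℂ))

attribute [local instance] Matrix.linftyOpNormedRing Matrix.linftyOpNormedAlgebra

/-- Under Assumption 1 (connectivity), the spectral radius of `Λ * P` is strictly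
less than `1`; in particular, `I - Λ * P` is invertible. -/
theorem stmt0 (N : ℕ) (hN : 1 ≤ N)
    (P Λ : Matrix (Fin N) (Fin N) ℝ)
    (hPnn : ∀ i j, 0 ≤ P i j)
    (hProw : ∀ i, ∑ j, P i j = 1)
    (hΛdiag : Λ.IsDiag)
    (hΛ : ∀ i, Λ i i ∈ Set.Icc (0 : ℝ) 1)
    (hconn : ∀ v : Fin N, ∃ (w : Fin N) (k : ℕ), Λ w w < 1 ∧ 0 < (P ^ k) v w) :
    specRad (Λ * P) < 1 ∧ IsUnit (1 - Λ * P) := by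
  have hNE : Nonempty (Fin N) := ⟨⟨0, hN⟩⟩
  set A : Matrix (Fin N) (Fin N) ℝ := Λ * P with hAdef
  -- entries of A
  have hA : ∀ i j, A i j = Λ i i * P i j := by
    intro i j
    rw [hAdef, Matrix.mul_apply]
    rw [Finset.sum_eq_single i]
    · intro b _ hb
      rw [hΛdiag (Ne.symm hb), zero_mul]
    · intro h; exact absurd (Finset.mem_univ i) h
  have hΛ0 : ∀ i, 0 ≤ Λ i i := fun i => (hΛ i).1
  have hΛ1 : ∀ i, Λ i i ≤ 1 := fun i => (hΛ i).2
  have hAnn : ∀ i j, 0 ≤ A i j := fun i j => by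
    rw [hA]; exact mul_nonneg (hΛ0 i) (hPnn i j)
  have hApow : ∀ k i j, 0 ≤ (A ^ k) i j := by
    intro k
    induction k with
    | zero => intro i j; rw [pow_zero]
              by_cases h : i = j <;> simp [Matrix.one_apply, h]
    | succ k ih =>
      intro i j
      rw [pow_succ, Matrix.mul_apply]
      exact Finset.sum_nonneg fun u _ => mul_nonneg (ih i u) (hAnn u j)
  have hPpow : ∀ k i j, 0 ≤ (P ^ k) i j := by
    intro k
    induction k with
    | zero => intro i j; rw [pow_zero]
              by_cases h : i = j <;> simp [Matrix.one_apply, h]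
    | succ k ih =>
      intro i j
      rw [pow_succ, Matrix.mul_apply]
      exact Finset.sum_nonneg fun u _ => mul_nonneg (ih i u) (hPnn u j)
  -- row sums
  set s : ℕ → Fin N → ℝ := fun k v => ∑ j, (A ^ k) v j with hsdef
  have hs0 : ∀ v, s 0 v = 1 := by
    intro v; simp [hsdef, Matrix.one_apply]
  have hsrec : ∀ k v, s (k + 1) v = ∑ j, A v j * s k j := by
    intro k v
    calc s (k + 1) v = ∑ j, ∑ u, A v u * (A ^ k) u j := by
          simp only [hsdef]
          refine Finset.sum_congr rfl fun j _ => ?_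
          rw [pow_succ' A k, Matrix.mul_apply]
      _ = ∑ u, ∑ j, A v u * (A ^ k) u j := Finset.sum_comm
      _ = ∑ j, A v j * s k j := by
          simp only [hsdef, Finset.mul_sum]
  have hrowA : ∀ v, ∑ j, A v j = Λ v v := by
    intro v
    simp only [hA]
    rw [← Finset.mul_sum, hProw, mul_one]
  have hsle : ∀ k v, s k v ≤ 1 := by
    intro k
    induction k with
    | zero => intro v; rw [hs0]
    | succ k ih =>
      intro v
      rw [hsrec]
      calc ∑ j, A v j * s k j ≤ ∑ j, A v j * 1 := by
            refine Finset.sum_le_sum fun j _ => ?_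
            exact mul_le_mul_of_nonneg_left (ih j) (hAnn v j)
        _ = Λ v v := by simpa using hrowA v
        _ ≤ 1 := hΛ1 v
  have hsnn : ∀ k v, 0 ≤ s k v := by
    intro k v
    exact Finset.sum_nonneg fun j _ => hApow k v j
  have hsmono : ∀ k v, s (k + 1) v ≤ s k v := by
    intro k
    induction k with
    | zero =>
      intro v
      rw [hsrec, hs0]
      calc ∑ j, A v j * s 0 j = Λ v v := by
            simp only [hs0, mul_one]; exact hrowA v
        _ ≤ 1 := hΛ1 v
    | succ k ih =>
      intro v
      rw [hsrec, hsrec]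
      refine Finset.sum_le_sum fun j _ => ?_
      exact mul_le_mul_of_nonneg_left (ih j) (hAnn v j)
  have hsanti : ∀ k m v, k ≤ m → s m v ≤ s k v := by
    intro k m v h
    induction m with
    | zero =>
      have hk0 : k = 0 := Nat.le_zero.mp h
      rw [hk0]
    | succ m ih =>
      rcases Nat.lt_or_ge k (m + 1) with h' | h'
      · exact le_trans (hsmono m v) (ih (by omega))
      · have : k = m + 1 := le_antisymm h h'
        rw [this]
  -- strict decrease
  have hstrict : ∀ k v w, 0 < (P ^ k) v w → Λ w w < 1 → s (k + 1) v < 1 := by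
    intro k
    induction k with
    | zero =>
      intro v w hpos hw
      have hvw : v = w := by
        by_contra h
        rw [pow_zero, Matrix.one_apply_ne h] at hpos
        exact lt_irrefl 0 hpos
      rw [hsrec]
      calc ∑ j, A v j * s 0 j = Λ v v := by
            simp only [hs0, mul_one]; exact hrowA v
        _ < 1 := hvw ▸ hw
    | succ k ih =>
      intro v w hpos hw
      -- P^(k+1) v w = ∑ u, P v u * (P^k) u w
      rw [pow_succ' P k, Matrix.mul_apply] at hpos
      obtain ⟨u, _, hu⟩ : ∃ u ∈ Finset.univ, 0 < P v u * (P ^ k) u w := by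
        by_contra h
        push_neg at h
        have : ∑ u, P v u * (P ^ k) u w ≤ 0 :=
          Finset.sum_nonpos fun u hu => h u hu
        linarith
      have hPvu : 0 < P v u := by
        rcases lt_or_eq_of_le (hPnn v u) with h | h
        · exact h
        · rw [← h, zero_mul] at hu; exact absurd hu (lt_irrefl 0)
      have hPkuw : 0 < (P ^ k) u w := by
        rcases lt_or_eq_of_le (hPpow k u w) with h | h
        · exact h
        · rw [← h, mul_zero] at hu; exact absurd hu (lt_irrefl 0)
      have hsu : s (k + 1) u < 1 := ih u w hPkuw hw
      rw [hsrec]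
      have key : ∑ j, P v j * s (k + 1) j < 1 := by
        rw [← hProw v]
        refine Finset.sum_lt_sum (fun j _ => ?_) ⟨u, Finset.mem_univ u, ?_⟩
        · calc P v j * s (k + 1) j ≤ P v j * 1 :=
                mul_le_mul_of_nonneg_left (hsle _ j) (hPnn v j)
            _ = P v j := mul_one _
        · calc P v u * s (k + 1) u < P v u * 1 :=
                mul_lt_mul_of_pos_left hsu hPvu
            _ = P v u := mul_one _
      calc ∑ j, A v j * s (k + 1) j = Λ v v * ∑ j, P v j * s (k + 1) j := by
            rw [Finset.mul_sum]
            refine Finset.sum_congr rfl fun j _ => ?_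
            rw [hA, mul_assoc]
        _ ≤ 1 * ∑ j, P v j * s (k + 1) j := by
            refine mul_le_mul_of_nonneg_right (hΛ1 v) ?_
            exact Finset.sum_nonneg fun j _ =>
              mul_nonneg (hPnn v j) (hsnn (k + 1) j)
        _ = ∑ j, P v j * s (k + 1) j := one_mul _
        _ < 1 := key
  -- choose a uniform power
  choose wf kf hwf hkf using hconn
  set K : ℕ := Finset.univ.sup kf with hK
  set m : ℕ := K + 1 with hm
  have hsm : ∀ v, s m v < 1 := by
    intro v
    have h1 : s m v ≤ s (kf v + 1) v :=
      hsanti (kf v + 1) m v (by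
        have := Finset.le_sup (f := kf) (Finset.mem_univ v)
        omega)
    exact lt_of_le_of_lt h1 (hstrict (kf v) v (wf v) (hkf v) (hwf v))
  -- bound the nnnorm of (complexified A)^m
  set B : Matrix (Fin N) (Fin N) ℂ := A.map (algebraMap ℝ ℂ) with hB
  have hBpow : B ^ m = (A ^ m).map (algebraMap ℝ ℂ) := by
    have : B = (algebraMap ℝ ℂ).mapMatrix A := rfl
    rw [this, ← map_pow]
    rfl
  -- a strict real bound on the row sums
  obtain ⟨r, hr1, hrge⟩ : ∃ r : ℝ≥0, r < 1 ∧ ∀ v, ∑ j, ‖(A ^ m) v j‖₊ ≤ r := by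
    set r : ℝ := Finset.univ.sup' (Finset.univ_nonempty) (fun v => s m v) with hrdef
    have hrlt : r < 1 := by
      rw [hrdef]
      exact (Finset.sup'_lt_iff _).2 fun v _ => hsm v
    have hrnn : 0 ≤ r := by
      obtain ⟨v⟩ := hNE
      exact le_trans (hsnn m v) (Finset.le_sup' _ (Finset.mem_univ v))
    refine ⟨⟨r, hrnn⟩, ?_, ?_⟩
    · exact_mod_cast hrlt
    · intro v
      have hsum : ((∑ j, ‖(A ^ m) v j‖₊ : ℝ≥0) : ℝ) = s m v := by
        rw [NNReal.coe_sum]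
        refine Finset.sum_congr rfl fun j _ => ?_
        rw [coe_nnnorm, Real.norm_eq_abs, abs_of_nonneg (hApow m v j)]
      have : ((∑ j, ‖(A ^ m) v j‖₊ : ℝ≥0) : ℝ) ≤ r := by
        rw [hsum]; exact Finset.le_sup' _ (Finset.mem_univ v)
      exact_mod_cast this
  have hBnorm : ‖B ^ m‖₊ ≤ r := by
    rw [hBpow, Matrix.linfty_opNNNorm_def]
    refine Finset.sup_le fun v _ => ?_
    refine le_trans (le_of_eq ?_) (hrge v)
    refine Finset.sum_congr rfl fun j _ => ?_
    simp [Matrix.map_apply]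
  -- spectral radius bound
  have hspec : specRad A < 1 := by
    have hle := spectrum.spectralRadius_le_pow_nnnorm_pow_one_div ℂ B K
    have hone : ‖(1 : Matrix (Fin N) (Fin N) ℂ)‖₊ = 1 := nnnorm_one
    rw [hone] at hle
    simp only [ENNReal.coe_one, ENNReal.one_rpow, mul_one] at hle
    refine lt_of_le_of_lt hle ?_
    have hbase : (‖B ^ (K + 1)‖₊ : ℝ≥0∞) < 1 := by
      calc (‖B ^ (K + 1)‖₊ : ℝ≥0∞) ≤ (r : ℝ≥0∞) := by exact_mod_cast hBnorm
        _ < 1 := by exact_mod_cast hr1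
    have hp : (0 : ℝ) < 1 / ((K : ℝ) + 1) := by positivity
    exact ENNReal.rpow_lt_one hbase hp
  refine ⟨hspec, ?_⟩
  -- invertibility of 1 - A
  by_contra hnot
  have hdet : (1 - A).det = 0 := by
    by_contra hd
    exact hnot ((Matrix.isUnit_iff_isUnit_det _).2 (isUnit_iff_ne_zero.2 hd))
  have hdetC : (1 - B).det = 0 := by
    have : (1 - B) = ((1 - A).map (algebraMap ℝ ℂ)) := by
      rw [hB]
      ext i j
      simp [Matrix.map_apply, Matrix.one_apply, Matrix.sub_apply]
      split_ifs <;> simp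
    rw [this,
      show (1 - A).map ⇑(algebraMap ℝ ℂ) = (algebraMap ℝ ℂ).mapMatrix (1 - A) from rfl,
      ← RingHom.map_det, hdet, map_zero]
  have hmem : (1 : ℂ) ∈ spectrum ℂ B := by
    rw [spectrum.mem_iff]
    intro hu
    rw [_root_.map_one] at hu
    have := (Matrix.isUnit_iff_isUnit_det _).1 hu
    rw [hdetC] at this
    exact this.ne_zero rfl
  have : (1 : ℝ≥0∞) ≤ specRad A := by
    have h1 : ((‖(1 : ℂ)‖₊ : ℝ≥0) : ℝ≥0∞) ≤ spectralRadius ℂ B :=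
      le_iSup₂ (f := fun k (_ : k ∈ spectrum ℂ B) => ((‖k‖₊ : ℝ≥0) : ℝ≥0∞)) 1 hmem
    exact (by simpa using h1 : (1 : ℝ≥0∞) ≤ spectralRadius ℂ B)
  exact absurd (lt_of_le_of_lt this hspec) (lt_irrefl 1)
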